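/- (Lemma 1) Let a ∈ ℂ, R > 0, let g be a holomorphic function on an open neighborhood of the closed disc B̄(a,R), and let v = Re g. Assume v(z) ≥ 0 for all z ∈ B̄(a,R) and v(z₁) = 0 for some point z₁ ∈ ∂B(a,R). Then v(a) ≤ 2R·|g′(z₁)|, i.e., v(a) ≤ 2R·|∇v(z₁)|. -/

import Mathlib

open Metric Filter Topology

/-- Schwarz lemma with closed target ball. -/
lemma schwarz_closed_aux {f : ℂ → ℂ} {c : ℂ} {R : ℝ}
    (hd : DifferentiableOn ℂ f (ball c R)) (hc : f c = 0)
    (hb : ∀ z ∈ ball c R, ‖f z‖ ≤ 1) {z : ℂ} (hz : z ∈ ball c R) :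
    ‖f z‖ ≤ dist z c / R := by
  have hR : 0 < R := by
    have := mem_ball.1 hz
    exact lt_of_le_of_lt dist_nonneg this
  have key : ∀ ε > (0:ℝ), ‖f z‖ ≤ (1 + ε) / R * dist z c := by
    intro ε hε
    have hm : Set.MapsTo f (ball c R) (closedBall (f c) (1 + ε)) := by
      intro w hw
      rw [hc, mem_closedBall, dist_zero_right]
      calc ‖f w‖ = ‖f w‖ := rfl
        _ ≤ 1 := hb w hw
        _ ≤ 1 + ε := by linarith
    have := Complex.dist_le_div_mul_dist_of_mapsTo_ball hd hm hz
    rwa [hc, dist_zero_right] at this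
  have hlim : Tendsto (fun ε : ℝ => (1 + ε) / R * dist z c) (𝓝[>] 0)
      (𝓝 (dist z c / R)) := by
    have : Tendsto (fun ε : ℝ => (1 + ε) / R * dist z c) (𝓝 0)
        (𝓝 ((1 + 0) / R * dist z c)) := by
      exact (((continuous_const.add continuous_id).div_const R).mul continuous_const).tendsto 0
    convert this.mono_left nhdsWithin_le_nhds using 2; ring
  refine ge_of_tendsto hlim ?_
  filter_upwards [self_mem_nhdsWithin] with ε hε
  exact key ε hε

/-- Lemma 1: if `v = Re g` is a nonnegative harmonic function on the closed disc
`B̄(a,R)` (with `g` holomorphic on a neighborhood) and `v(z₁) = 0` at some boundary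
point `z₁`, then `v(a) ≤ 2R |∇v(z₁)| = 2R |g′(z₁)|`. -/
theorem nonneg_harmonic_boundary_zero_gradient_bound
    (a : ℂ) (R : ℝ) (hR : 0 < R) (U : Set ℂ) (hU : IsOpen U)
    (hUR : closedBall a R ⊆ U) (g : ℂ → ℂ) (hg : DifferentiableOn ℂ g U)
    (hpos : ∀ z ∈ closedBall a R, 0 ≤ (g z).re)
    (z₁ : ℂ) (hz₁ : z₁ ∈ sphere a R) (hz₁0 : (g z₁).re = 0) :
    (g a).re ≤ 2 * R * ‖deriv g z₁‖ := by
  classical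
  set α : ℝ := (g a).re with hα
  rcases le_or_gt α 0 with hα0 | hα0
  · calc α ≤ 0 := hα0
      _ ≤ 2 * R * ‖deriv g z₁‖ := by positivity
  -- setup
  set p : ℂ := g a with hp
  set q : ℂ := (starRingEnd ℂ) p with hq
  set den : ℂ → ℂ := fun z => g z + q with hden
  set h : ℂ → ℂ := fun z => (g z - p) / den z with hh
  have hz₁ball : z₁ ∈ closedBall a R := sphere_subset_closedBall hz₁
  have haball : a ∈ closedBall a R := mem_closedBall_self hR.le
  -- the key normSq identity
  have normSq_id : ∀ w : ℂ, Complex.normSq (w + q) - Complex.normSq (w - p)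
      = 4 * w.re * α := by
    intro w
    simp only [hq, Complex.normSq_apply, Complex.add_re, Complex.add_im, Complex.sub_re,
      Complex.sub_im, Complex.conj_re, Complex.conj_im, hα]
    ring
  -- denominator has positive real part on the closed ball
  have hdenre : ∀ z ∈ closedBall a R, α ≤ (den z).re := by
    intro z hz
    have := hpos z hz
    simp only [hden, hq, Complex.add_re, Complex.conj_re]
    linarith
  have hden0 : ∀ z ∈ closedBall a R, den z ≠ 0 := by
    intro z hz h0
    have := hdenre z hz
    rw [h0] at this
    simp at this
    linarith
  -- h is bounded by 1 on the closed ball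
  have habs1 : ∀ z ∈ closedBall a R, ‖h z‖ ≤ 1 := by
    intro z hz
    rw [hh]
    simp only [norm_div]
    rw [div_le_one (norm_pos_iff.2 (hden0 z hz))]
    have hns : Complex.normSq (g z - p) ≤ Complex.normSq (g z + q) := by
      have := normSq_id (g z)
      nlinarith [hpos z hz, hα0]
    rw [Complex.norm_def, Complex.norm_def]
    exact Real.sqrt_le_sqrt hns
  -- h a = 0
  have ha0 : h a = 0 := by simp [hh, hp]
  -- |h z₁| = 1
  have hz₁abs : ‖h z₁‖ = 1 := by
    have hne := hden0 z₁ hz₁ball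
    have hns : Complex.normSq (g z₁ - p) = Complex.normSq (g z₁ + q) := by
      have := normSq_id (g z₁)
      rw [hz₁0] at this
      linarith
    rw [hh]
    simp only [norm_div]
    rw [div_eq_one_iff_eq (norm_ne_zero_iff.2 (hden0 z₁ hz₁ball))]
    rw [Complex.norm_def, Complex.norm_def, hns]
  -- differentiability of h on the closed ball
  have hgd : ∀ z ∈ closedBall a R, DifferentiableAt ℂ g z := by
    intro z hz
    exact hg.differentiableAt (hU.mem_nhds (hUR hz))
  have hhd : ∀ z ∈ closedBall a R, DifferentiableAt ℂ h z := by
    intro z hz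
    exact ((hgd z hz).sub_const p).div ((hgd z hz).add_const q) (hden0 z hz)
  -- Schwarz bound
  have hsch : ∀ z ∈ ball a R, ‖h z‖ ≤ dist z a / R := by
    intro z hz
    refine schwarz_closed_aux ?_ ha0 ?_ hz
    · exact fun w hw => (hhd w (ball_subset_closedBall hw)).differentiableWithinAt
    · exact fun w hw => habs1 w (ball_subset_closedBall hw)
  -- derivative of h at z₁
  set d : ℂ := (deriv g z₁ * den z₁ - (g z₁ - p) * deriv g z₁) / den z₁ ^ 2 with hd
  have hhderiv : HasDerivAt h d z₁ := by
    have h1 : HasDerivAt (fun z => g z - p) (deriv g z₁) z₁ :=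
      ((hgd z₁ hz₁ball).hasDerivAt).sub_const p
    have h2 : HasDerivAt den (deriv g z₁) z₁ :=
      ((hgd z₁ hz₁ball).hasDerivAt).add_const q
    exact h1.div h2 (hden0 z₁ hz₁ball)
  -- the radial slope argument : 1 ≤ ‖(z₁ - a) • d‖
  have hdist : dist z₁ a = R := mem_sphere.1 hz₁
  have hslope : 1 ≤ ‖(z₁ - a) • d‖ := by
    set ψ : ℝ → ℂ := fun t => h (a + t • (z₁ - a)) with hψ
    have hγ : ∀ t : ℝ, HasDerivAt (fun s : ℝ => a + s • (z₁ - a)) (z₁ - a) t := by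
      intro t
      simpa using ((hasDerivAt_id t).smul_const (z₁ - a)).const_add a
    have hγ1 : a + (1:ℝ) • (z₁ - a) = z₁ := by simp
    have hψd : HasDerivAt ψ ((z₁ - a) • d) 1 := by
      have hc : HasDerivAt h d (a + (1:ℝ) • (z₁ - a)) := by rw [hγ1]; exact hhderiv
      have := HasDerivAt.scomp (1:ℝ) hc (hγ 1)
      simpa [hψ, Function.comp_def] using this
    have htend : Filter.Tendsto (slope ψ 1) (𝓝[≠] 1) (𝓝 ((z₁ - a) • d)) :=
      hasDerivAt_iff_tendsto_slope.1 hψd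
    have hle : Filter.Tendsto (slope ψ 1) (𝓝[<] 1) (𝓝 ((z₁ - a) • d)) :=
      htend.mono_left (nhdsWithin_mono 1 (fun x hx => ne_of_lt hx))
    have : ∀ᶠ t in 𝓝[<] (1:ℝ), 1 ≤ ‖slope ψ 1 t‖ := by
      filter_upwards [Ioo_mem_nhdsLT_of_mem (Set.mem_Ioc.2 ⟨zero_lt_one, le_rfl⟩)]
        with t ht
      have ht0 : (0:ℝ) < t := ht.1
      have ht1 : t < 1 := ht.2
      have hmem : a + t • (z₁ - a) ∈ ball a R := by
        rw [mem_ball, dist_eq_norm]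
        have : a + t • (z₁ - a) - a = t • (z₁ - a) := by ring_nf
        rw [this, norm_smul]
        have : ‖z₁ - a‖ = R := by rw [← dist_eq_norm]; exact hdist
        rw [this, Real.norm_eq_abs, abs_of_pos ht0]
        nlinarith
      have hψt : ‖ψ t‖ ≤ t := by
        have := hsch _ hmem
        rw [dist_eq_norm] at this
        have he : a + t • (z₁ - a) - a = t • (z₁ - a) := by ring_nf
        rw [he, norm_smul] at this
        have hn : ‖z₁ - a‖ = R := by rw [← dist_eq_norm]; exact hdist
        rw [hn, Real.norm_eq_abs, abs_of_pos ht0] at this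
        calc ‖ψ t‖ ≤ t * R / R := this
          _ = t := by field_simp
      have hψ1 : ‖ψ 1‖ = 1 := by
        rw [hψ]; simp only [hγ1]; exact hz₁abs
      have hnum : 1 - t ≤ ‖ψ t - ψ 1‖ := by
        have := norm_sub_norm_le (ψ 1) (ψ t)
        have h1 : ‖ψ 1‖ = 1 := hψ1
        have h2 : ‖ψ t‖ ≤ t := hψt
        rw [norm_sub_rev] at this
        linarith
      rw [slope_def_module, norm_smul, norm_inv, Real.norm_eq_abs,
        abs_of_neg (by linarith : t - 1 < 0), ← div_eq_inv_mul,
        le_div_iff₀ (by linarith), one_mul]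
      linarith [hnum]
    exact ge_of_tendsto hle.norm this
  -- unwind the derivative bound
  have hdval : d = deriv g z₁ * (p + q) / den z₁ ^ 2 := by
    rw [hd]; congr 1; ring
  have hpq : p + q = ((2 * α : ℝ) : ℂ) := by
    rw [hq, Complex.add_conj]
  have hNpos : 0 < Complex.normSq (den z₁) :=
    Complex.normSq_pos.2 (hden0 z₁ hz₁ball)
  have hNge : α ^ 2 ≤ Complex.normSq (den z₁) := by
    have h1 := hdenre z₁ hz₁ball
    rw [Complex.normSq_apply]
    nlinarith [sq_nonneg (den z₁).im]
  have habsd : ‖d‖ = ‖deriv g z₁‖ * (2 * α) / Complex.normSq (den z₁) := by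
    rw [hdval, norm_div, norm_mul, hpq, norm_pow, Complex.sq_norm]
    congr 1
    rw [Complex.norm_real, Real.norm_eq_abs, abs_of_pos (by linarith)]
  have hnorm : ‖(z₁ - a) • d‖ = R * ‖d‖ := by
    have hza : ‖z₁ - a‖ = R := by rw [← dist_eq_norm]; exact hdist
    rw [norm_smul, hza]
  rw [hnorm, habsd] at hslope
  have hfinal : Complex.normSq (den z₁) ≤ R * (‖deriv g z₁‖ * (2 * α)) := by
    rw [← mul_div_assoc, le_div_iff₀ hNpos, one_mul] at hslope
    linarith
  nlinarith [hNge, hα0]
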